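/- (Proposition 4, β version.) Suppose there exists a switching matrix M such that M A_o M is eventually positive, and let μ := ρ(A_o), assuming μ > 0. Suppose λ ∈ σ(A_a) satisfies Im(λ) > 0, Re(λ) > 0, and λ, λ̄ are the leading eigenvalues of A_a: for every λ_a ∈ σ(A_a), Re(λ_a) ≤ Re(λ), with equality only if λ_a ∈ {λ, λ̄}. Suppose d > 0, u > 0, α ≥ 0, γ ≥ 0, δ ≥ 0 and γ + δμ > 0. Then there exists β* ≥ 0 such that for every β > β*: (i) for all λ_a ∈ σ(A_a) and μ_o ∈ σ(A_o) with (λ_a, μ_o) ∉ {(λ, μ), (λ̄, μ)}, one has Re(η(u, λ_a, μ_o)) < Re(η(u, λ, μ)); (ii) η(u, λ, μ) and η(u, λ̄, μ) = conj(η(u, λ, μ)) are eigenvalues of J(u) with nonzero imaginary part, i.e., the leading eigenvalues of J(u) are a non-real complex-conjugate pair; (iii) K := max_{λ'∈σ(A_a), μ'∈σ(A_o)} Re(α + γλ' + βμ' + δλ'μ') equals α + γRe(λ) + βμ + δμRe(λ) and is strictly positive. -/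

import Mathlib

open Matrix Complex Polynomial
open scoped Kronecker

/-- The complex spectrum of a real square matrix: the set of complex roots of its
characteristic polynomial. -/
noncomputable def specC {n : Type*} [Fintype n] [DecidableEq n]
    (M : Matrix n n ℝ) : Set ℂ :=
  {z : ℂ | ((M.map (Complex.ofReal)).charpoly).IsRoot z}

/-- The Jacobian matrix `J(u)` of the belief dynamics at the origin. -/
noncomputable def Jmat {Na No : ℕ}
    (Aa : Matrix (Fin Na) (Fin Na) ℝ) (Ao : Matrix (Fin No) (Fin No) ℝ)
    (d u α γ β δ : ℝ) : Matrix (Fin Na × Fin No) (Fin Na × Fin No) ℝ :=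
  (-d + u * α) • (1 : Matrix (Fin Na × Fin No) (Fin Na × Fin No) ℝ)
    + (u * γ) • (Aa ⊗ₖ (1 : Matrix (Fin No) (Fin No) ℝ))
    + (u * β) • ((1 : Matrix (Fin Na) (Fin Na) ℝ) ⊗ₖ Ao)
    + (u * δ) • (Aa ⊗ₖ Ao)

/-- A switching matrix: a diagonal real matrix whose diagonal entries are `1` or `-1`. -/
def IsSwitching {n : Type*} [Fintype n] [DecidableEq n] (M : Matrix n n ℝ) : Prop :=
  ∃ f : n → ℝ, (∀ i, f i = 1 ∨ f i = -1) ∧ M = Matrix.diagonal f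

/-- A real square matrix `B` is eventually positive if all entries of `B ^ k` are
strictly positive for all sufficiently large `k`. -/
def EventuallyPos {n : Type*} [Fintype n] [DecidableEq n] (B : Matrix n n ℝ) : Prop :=
  ∃ k₀ : ℕ, 0 < k₀ ∧ ∀ k ≥ k₀, ∀ i j, 0 < (B ^ k) i j

/-- The spectral radius of a real square matrix: the maximal modulus of its complex
eigenvalues. -/
noncomputable def specRad {n : Type*} [Fintype n] [DecidableEq n]
    (M : Matrix n n ℝ) : ℝ :=
  sSup {x : ℝ | ∃ z ∈ specC M, x = ‖z‖}

/-- The generating map `η(u, λ, μ) = −d + u(α + γλ + βμ + δλμ)`. -/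
noncomputable def ηgen (d u α γ β δ : ℝ) (l m : ℂ) : ℂ :=
  -(d : ℂ) + (u : ℂ) * ((α : ℂ) + (γ : ℂ) * l + (β : ℂ) * m + (δ : ℂ) * l * m)

set_option linter.unusedSectionVars false

section Aux
variable {n m : Type*} [Fintype n] [DecidableEq n] [Fintype m] [DecidableEq m]

variable {n m : Type*} [Fintype n] [DecidableEq n] [Fintype m] [DecidableEq m]

theorem eval_charpoly' (A : Matrix n n ℂ) (z : ℂ) :
    A.charpoly.eval z = (z • (1 : Matrix n n ℂ) - A).det := by
  rw [Matrix.charpoly, ← Polynomial.coe_evalRingHom, RingHom.map_det]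
  congr 1
  ext i j
  by_cases h : i = j
  · subst h; simp [charmatrix_apply_eq, Matrix.one_apply]
  · simp [charmatrix_apply_ne _ _ _ h, Matrix.one_apply_ne h]

theorem isRoot_charpoly_iff (A : Matrix n n ℂ) (z : ℂ) :
    A.charpoly.IsRoot z ↔ ∃ v, v ≠ 0 ∧ A.mulVec v = z • v := by
  rw [Polynomial.IsRoot, eval_charpoly', ← Matrix.exists_mulVec_eq_zero_iff]
  constructor
  · rintro ⟨v, hv, h⟩
    refine ⟨v, hv, ?_⟩
    rw [Matrix.sub_mulVec, Matrix.smul_mulVec, Matrix.one_mulVec, sub_eq_zero] at h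
    exact h.symm
  · rintro ⟨v, hv, h⟩
    refine ⟨v, hv, ?_⟩
    rw [Matrix.sub_mulVec, Matrix.smul_mulVec, Matrix.one_mulVec, h, sub_self]

theorem specC_iff (M : Matrix n n ℝ) (z : ℂ) :
    z ∈ specC M ↔ ∃ v, v ≠ 0 ∧ (M.map Complex.ofReal).mulVec v = z • v :=
  isRoot_charpoly_iff _ z

-- similarity with switching matrix
theorem specC_switch (A M : Matrix n n ℝ)
    (hM : ∃ f : n → ℝ, (∀ i, f i = 1 ∨ f i = -1) ∧ M = Matrix.diagonal f) :
    specC (M * A * M) = specC A := by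
  obtain ⟨f, hf, rfl⟩ := hM
  set Mc : Matrix n n ℂ := Matrix.diagonal (fun i => (f i : ℂ)) with hMcdef
  have hdm : (Matrix.diagonal f).map Complex.ofReal = Mc := by
    rw [Matrix.diagonal_map (by simp)]
  have hMMc : Mc * Mc = 1 := by
    rw [hMcdef, Matrix.diagonal_mul_diagonal]
    have : (fun i => (f i : ℂ) * (f i : ℂ)) = fun _ => (1 : ℂ) := by
      funext i; rcases hf i with h | h <;> simp [h]
    rw [this, Matrix.diagonal_one]
  have hmap : ((Matrix.diagonal f * A * Matrix.diagonal f).map Complex.ofReal)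
      = Mc * A.map Complex.ofReal * Mc := by
    have hmm : ∀ (X Y : Matrix n n ℝ), (X * Y).map Complex.ofReal
        = X.map Complex.ofReal * Y.map Complex.ofReal := by
      intro X Y; ext i j; simp [Matrix.mul_apply]
    rw [hmm, hmm, hdm]
  ext z
  simp only [specC, Set.mem_setOf_eq, Polynomial.IsRoot, eval_charpoly']
  have key : z • (1 : Matrix n n ℂ) - (Matrix.diagonal f * A * Matrix.diagonal f).map
      Complex.ofReal = Mc * (z • (1 : Matrix n n ℂ) - A.map Complex.ofReal) * Mc := by
    rw [hmap, Matrix.mul_sub, Matrix.sub_mul]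
    congr 1
    rw [Matrix.mul_smul, mul_one, Matrix.smul_mul, hMMc]
  rw [key, Matrix.det_mul, Matrix.det_mul]
  have hdet : Mc.det * Mc.det = 1 := by rw [← Matrix.det_mul, hMMc, Matrix.det_one]
  constructor
  · intro h
    rw [mul_assoc] at h
    rcases mul_eq_zero.mp h with h3 | h3
    · exfalso; rw [h3] at hdet; simp at hdet
    rcases mul_eq_zero.mp h3 with h4 | h4
    · exact h4
    · exfalso; rw [h4] at hdet; simp at hdet
  · intro h; rw [h]; ring

-- conj closure
theorem specC_conj {M : Matrix n n ℝ} {z : ℂ} (h : z ∈ specC M) :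
    (starRingEnd ℂ) z ∈ specC M := by
  rw [specC_iff] at h ⊢
  obtain ⟨v, hv, hMv⟩ := h
  refine ⟨fun i => (starRingEnd ℂ) (v i), ?_, ?_⟩
  · intro h0
    apply hv; funext i
    have := congrFun h0 i
    simpa using congrArg (starRingEnd ℂ) this
  · funext i
    have := congrFun hMv i
    have h2 := congrArg (starRingEnd ℂ) this
    simpa [Matrix.mulVec, dotProduct, map_sum, Complex.conj_ofReal, mul_comm] using h2


theorem exists_eig_of_aeval (A : Matrix n n ℂ) (p : ℂ[X]) (hp : p ≠ 0) (v : n → ℂ)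
    (hv : v ≠ 0) (h : (Polynomial.aeval A p).mulVec v = 0) :
    ∃ z, p.IsRoot z ∧ ∃ u, u ≠ 0 ∧ A.mulVec u = z • u := by
  obtain ⟨N, hd⟩ : ∃ N, p.natDegree = N := ⟨_, rfl⟩
  induction N using Nat.strong_induction_on generalizing p v with
  | _ N ih =>
  rcases Nat.eq_zero_or_pos N with hN | hN
  · subst hN
    obtain ⟨c, rfl⟩ := Polynomial.natDegree_eq_zero.mp hd
    have hc : c ≠ 0 := fun hc => hp (by simp [hc])
    exfalso
    apply hv
    have : (Polynomial.aeval A (C c)).mulVec v = c • v := by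
      simp [Polynomial.aeval_C, Algebra.algebraMap_eq_smul_one, Matrix.smul_mulVec]
    rw [this] at h
    exact (smul_eq_zero.mp h).resolve_left hc
  · have hdeg : 0 < p.degree := by
      rw [← Polynomial.natDegree_pos_iff_degree_pos]
      omega
    obtain ⟨z, hz⟩ := Complex.exists_root hdeg
    obtain ⟨q, rfl⟩ := (Polynomial.dvd_iff_isRoot.mpr hz)
    have hq : q ≠ 0 := fun h0 => hp (by simp [h0])
    have haeval : (Polynomial.aeval A ((X - C z) * q)) =
        (A - z • 1) * Polynomial.aeval A q := by
      rw [_root_.map_mul]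
      congr 1
      simp [Algebra.algebraMap_eq_smul_one]
    set u := (Polynomial.aeval A q).mulVec v with hu
    by_cases hu0 : u = 0
    · have hqd : q.natDegree < N := by
        have : ((X - C z) * q).natDegree = 1 + q.natDegree := by
          rw [Polynomial.natDegree_mul (Polynomial.X_sub_C_ne_zero z) hq,
            Polynomial.natDegree_X_sub_C]
        omega
      obtain ⟨z', hz', hu'⟩ := ih q.natDegree hqd q hq v hv hu0 rfl
      exact ⟨z', by simp [Polynomial.IsRoot] at hz' ⊢; tauto, hu'⟩
    · refine ⟨z, hz, u, hu0, ?_⟩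
      rw [haeval, ← Matrix.mulVec_mulVec, ← hu] at h
      rw [Matrix.sub_mulVec, Matrix.smul_mulVec, Matrix.one_mulVec, sub_eq_zero] at h
      exact h

theorem kron_mulVec (A : Matrix n n ℂ) (B : Matrix m m ℂ) (v : n → ℂ) (w : m → ℂ) :
    (A ⊗ₖ B).mulVec (fun p => v p.1 * w p.2)
      = fun p => (A.mulVec v p.1) * (B.mulVec w p.2) := by
  funext p
  simp only [Matrix.mulVec, dotProduct, Matrix.kroneckerMap_apply,
    Fintype.sum_prod_type, Finset.sum_mul_sum]
  rw [Finset.sum_congr rfl]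
  intro j _
  rw [Finset.sum_congr rfl]
  intro l _
  ring

theorem Jmat_map {Na No : ℕ} (Aa : Matrix (Fin Na) (Fin Na) ℝ)
    (Ao : Matrix (Fin No) (Fin No) ℝ) (d u α γ β δ : ℝ) :
    (Jmat Aa Ao d u α γ β δ).map Complex.ofReal
      = ((-d + u * α : ℝ) : ℂ) • (1 : Matrix (Fin Na × Fin No) (Fin Na × Fin No) ℂ)
        + ((u * γ : ℝ) : ℂ) • ((Aa.map Complex.ofReal) ⊗ₖ (1 : Matrix (Fin No) (Fin No) ℂ))
        + ((u * β : ℝ) : ℂ) • ((1 : Matrix (Fin Na) (Fin Na) ℂ) ⊗ₖ (Ao.map Complex.ofReal))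
        + ((u * δ : ℝ) : ℂ) • ((Aa.map Complex.ofReal) ⊗ₖ (Ao.map Complex.ofReal)) := by
  ext ⟨i, j⟩ ⟨k, l⟩
  simp only [Jmat, Matrix.map_apply, Matrix.add_apply, Matrix.smul_apply,
    Matrix.kroneckerMap_apply, Matrix.one_apply, Prod.mk.injEq, smul_eq_mul]
  split_ifs <;> push_cast <;> ring

theorem eta_mem_specJ {Na No : ℕ} (Aa : Matrix (Fin Na) (Fin Na) ℝ)
    (Ao : Matrix (Fin No) (Fin No) ℝ) (d u α γ β δ : ℝ) {l m : ℂ}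
    (hl : l ∈ specC Aa) (hm : m ∈ specC Ao) :
    ηgen d u α γ β δ l m ∈ specC (Jmat Aa Ao d u α γ β δ) := by
  rw [specC_iff] at hl hm ⊢
  obtain ⟨v, hv, hAv⟩ := hl
  obtain ⟨w, hw, hAw⟩ := hm
  obtain ⟨i, hi⟩ := Function.ne_iff.mp hv
  obtain ⟨j, hj⟩ := Function.ne_iff.mp hw
  refine ⟨fun p => v p.1 * w p.2, ?_, ?_⟩
  · intro h0
    exact (mul_ne_zero hi hj) (congrFun h0 (i, j))
  · rw [Jmat_map]
    rw [Matrix.add_mulVec, Matrix.add_mulVec, Matrix.add_mulVec]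
    rw [Matrix.smul_mulVec, Matrix.smul_mulVec, Matrix.smul_mulVec,
      Matrix.smul_mulVec]
    rw [Matrix.one_mulVec, kron_mulVec, kron_mulVec, kron_mulVec]
    funext p
    simp only [Pi.add_apply, Pi.smul_apply, smul_eq_mul, hAv, hAw, Matrix.one_mulVec,
      Pi.smul_apply, smul_eq_mul, ηgen]
    push_cast
    ring

theorem mapC_mul (X Y : Matrix n n ℝ) : (X * Y).map Complex.ofReal
    = X.map Complex.ofReal * Y.map Complex.ofReal := by
  ext i j; simp [Matrix.mul_apply]

theorem mapC_pow (X : Matrix n n ℝ) (k : ℕ) :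
    (X ^ k).map Complex.ofReal = (X.map Complex.ofReal) ^ k := by
  induction k with
  | zero => ext i j; simp [Matrix.one_apply]; split_ifs <;> simp
  | succ k ih => rw [pow_succ, pow_succ, mapC_mul, ih]

theorem specC_finite (M : Matrix n n ℝ) : (specC M).Finite :=
  Polynomial.finite_setOf_isRoot (Matrix.charpoly_monic _).ne_zero

theorem specC_nonempty [Nonempty n] (M : Matrix n n ℝ) : (specC M).Nonempty := by
  obtain ⟨z, hz⟩ := Complex.exists_root (f := (M.map Complex.ofReal).charpoly)
    (by rw [Matrix.charpoly_degree_eq_dim]; exact_mod_cast Fintype.card_pos)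
  exact ⟨z, hz⟩

theorem abs_le_specRad {M : Matrix n n ℝ} {z : ℂ} (hz : z ∈ specC M) :
    ‖z‖ ≤ specRad M := by
  apply le_csSup
  · exact ((specC_finite M).image _).bddAbove.mono
      (by intro x hx; obtain ⟨z', hz', rfl⟩ := hx; exact ⟨z', hz', rfl⟩)
  · exact ⟨z, hz, rfl⟩

theorem exists_abs_eq_specRad [Nonempty n] (M : Matrix n n ℝ) :
    ∃ z ∈ specC M, ‖z‖ = specRad M := by
  have hfin : {x : ℝ | ∃ z ∈ specC M, x = ‖z‖}.Finite := by
    have : {x : ℝ | ∃ z ∈ specC M, x = ‖z‖} = (fun z : ℂ => ‖z‖) '' specC M := by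
      ext x; constructor
      · rintro ⟨z, hz, rfl⟩; exact ⟨z, hz, rfl⟩
      · rintro ⟨z, hz, rfl⟩; exact ⟨z, hz, rfl⟩
    rw [this]; exact (specC_finite M).image _
  have hne : {x : ℝ | ∃ z ∈ specC M, x = ‖z‖}.Nonempty := by
    obtain ⟨z, hz⟩ := specC_nonempty M
    exact ⟨‖z‖, z, hz, rfl⟩
  obtain ⟨z, hz, h⟩ := hne.csSup_mem hfin
  exact ⟨z, hz, h.symm⟩

theorem specRad_nonneg [Nonempty n] (M : Matrix n n ℝ) : 0 ≤ specRad M := by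
  obtain ⟨z, hz, h⟩ := exists_abs_eq_specRad M
  rw [← h]; exact norm_nonneg _

-- converse spectral mapping for powers
theorem specC_pow_rev {B : Matrix n n ℝ} {w : ℂ} {k : ℕ} (hk : 0 < k)
    (hw : w ∈ specC (B ^ k)) : ∃ z ∈ specC B, z ^ k = w := by
  rw [specC_iff] at hw
  obtain ⟨v, hv, hmv⟩ := hw
  rw [mapC_pow] at hmv
  have h0 : (Polynomial.aeval (B.map Complex.ofReal) (X ^ k - C w)).mulVec v = 0 := by
    rw [map_sub, map_pow, Polynomial.aeval_X, Polynomial.aeval_C,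
      Algebra.algebraMap_eq_smul_one]
    rw [Matrix.sub_mulVec, hmv, Matrix.smul_mulVec, Matrix.one_mulVec, sub_self]
  obtain ⟨z, hz, u, hu, hAu⟩ := exists_eig_of_aeval _ _
    (Polynomial.X_pow_sub_C_ne_zero hk w) v hv h0
  refine ⟨z, (specC_iff B z).mpr ⟨u, hu, hAu⟩, ?_⟩
  have := hz
  simp only [Polynomial.IsRoot, Polynomial.eval_sub, Polynomial.eval_pow, Polynomial.eval_X,
    Polynomial.eval_C, sub_eq_zero] at this
  exact this

-- trace bound
theorem trace_pow_bound [Nonempty n] (B : Matrix n n ℝ) {r : ℝ}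
    (hr : ∀ z ∈ specC B, ‖z‖ ≤ r) {k : ℕ} (hk : 0 < k) :
    (B ^ k).trace ≤ (Fintype.card n : ℝ) * r ^ k := by
  have hnn : 0 ≤ r := le_trans (norm_nonneg _)
      (hr _ (specC_nonempty B).some_mem)
  have htr : (((B ^ k).trace : ℝ) : ℂ) = ((B ^ k).map Complex.ofReal).trace := by
    simp [Matrix.trace, Matrix.map_apply]
  have h1 : ((B ^ k).map Complex.ofReal).trace
      = (((B ^ k).map Complex.ofReal).charpoly).roots.sum :=
    Matrix.trace_eq_sum_roots_charpoly _
  have hroots : ∀ w ∈ (((B ^ k).map Complex.ofReal).charpoly).roots, ‖w‖ ≤ r ^ k := by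
    intro w hw
    have hw' : w ∈ specC (B ^ k) := Polynomial.isRoot_of_mem_roots hw
    obtain ⟨z, hz, rfl⟩ := specC_pow_rev hk hw'
    rw [norm_pow]
    exact pow_le_pow_left₀ (norm_nonneg _) (hr z hz) k
  have hcard : Multiset.card (((B ^ k).map Complex.ofReal).charpoly).roots
      = Fintype.card n := by
    have hsp : (((B ^ k).map Complex.ofReal).charpoly).Splits :=
      IsAlgClosed.splits _
    rw [Polynomial.splits_iff_card_roots.mp hsp, Matrix.charpoly_natDegree_eq_dim]
  calc (B ^ k).trace ≤ ‖(((B ^ k).trace : ℝ) : ℂ)‖ := by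
        rw [Complex.norm_real, Real.norm_eq_abs]; exact le_abs_self _
    _ = ‖((((B ^ k).map Complex.ofReal).charpoly).roots.sum)‖ := by rw [htr, h1]
    _ ≤ ((((B ^ k).map Complex.ofReal).charpoly).roots.map (fun w => ‖w‖)).sum := by
        simpa using norm_multiset_sum_le (((B ^ k).map Complex.ofReal).charpoly).roots
    _ ≤ (Multiset.card ((((B ^ k).map Complex.ofReal).charpoly).roots.map
          (fun w => ‖w‖))) • (r ^ k) := by
        apply Multiset.sum_le_card_nsmul
        intro x hx
        obtain ⟨w, hw, rfl⟩ := Multiset.mem_map.mp hx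
        exact hroots w hw
    _ = (Fintype.card n : ℝ) * r ^ k := by
        rw [Multiset.card_map, hcard, nsmul_eq_mul]

theorem pow_entries_nonneg {P : Matrix n n ℝ} (hP : ∀ i j, 0 ≤ P i j) (s : ℕ) :
    ∀ i j, 0 ≤ (P ^ s) i j := by
  induction s with
  | zero => intro i j; rw [pow_zero]; by_cases h : i = j <;>
      simp [Matrix.one_apply, h]
  | succ s ih =>
    intro i j
    rw [pow_succ, Matrix.mul_apply]
    exact Finset.sum_nonneg fun l _ => mul_nonneg (ih i l) (hP l j)

theorem perron_contra [Nonempty n] {B : Matrix n n ℝ} {k : ℕ} (hkpos : 0 < k)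
    (hpos : ∀ i j, 0 < (B ^ k) i j) {r : ℝ} (hr : 0 < r)
    (hspec : ∀ z ∈ specC B, ‖z‖ ≤ r)
    {u : n → ℝ} (hu0 : ∀ i, 0 ≤ u i) {i₀ : n} (hui₀ : 0 < u i₀)
    (hge : ∀ i, r ^ k * u i ≤ ((B ^ k).mulVec u) i)
    (hne : (B ^ k).mulVec u ≠ fun i => r ^ k * u i) : False := by
  set P := B ^ k with hP
  have hPnn : ∀ i j, 0 ≤ P i j := fun i j => (hpos i j).le
  set y := P.mulVec u with hy
  have ypos : ∀ i, 0 < y i := by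
    intro i
    have h1 : 0 < P i i₀ * u i₀ := mul_pos (hpos i i₀) hui₀
    have h2 : P i i₀ * u i₀ ≤ ∑ j, P i j * u j :=
      Finset.single_le_sum (fun j _ => mul_nonneg (hPnn i j) (hu0 j)) (Finset.mem_univ i₀)
    exact lt_of_lt_of_le h1 h2
  set s : n → ℝ := fun i => y i - r ^ k * u i with hs
  have hs0 : ∀ i, 0 ≤ s i := fun i => sub_nonneg.mpr (hge i)
  obtain ⟨j₁, hj₁⟩ := Function.ne_iff.mp hne
  have hsj₁ : 0 < s j₁ := lt_of_le_of_ne (hs0 j₁) (fun h => hj₁ (by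
    have := h.symm; rw [hs, sub_eq_zero] at this; exact this))
  have Ps_pos : ∀ i, 0 < (P.mulVec s) i := by
    intro i
    have h1 : 0 < P i j₁ * s j₁ := mul_pos (hpos i j₁) hsj₁
    have h2 : P i j₁ * s j₁ ≤ ∑ j, P i j * s j :=
      Finset.single_le_sum (fun j _ => mul_nonneg (hPnn i j) (hs0 j)) (Finset.mem_univ j₁)
    exact lt_of_lt_of_le h1 h2
  have hPy : ∀ i, (P.mulVec y) i = r ^ k * y i + (P.mulVec s) i := by
    have hysum : y = (r ^ k) • u + s := by
      funext i; simp only [Pi.add_apply, Pi.smul_apply, smul_eq_mul, hs]; ring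
    have h2 : P.mulVec y = (r ^ k) • (P.mulVec u) + P.mulVec s := by
      conv_lhs => rw [hysum]
      rw [Matrix.mulVec_add, Matrix.mulVec_smul]
    intro i
    rw [h2]
    simp only [Pi.add_apply, Pi.smul_apply, smul_eq_mul, ← hy]
  set ε := Finset.univ.inf' Finset.univ_nonempty (fun i => (P.mulVec s) i / y i) with hε
  have hεpos : 0 < ε := by
    rw [hε, Finset.lt_inf'_iff]
    intro i _
    exact div_pos (Ps_pos i) (ypos i)
  set c := r ^ k + ε with hc
  have hrk : 0 < r ^ k := pow_pos hr k
  have hcpos : 0 < c := by positivity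
  have hcy : ∀ i, c * y i ≤ (P.mulVec y) i := by
    intro i
    rw [hPy i, hc]
    have : ε ≤ (P.mulVec s) i / y i := Finset.inf'_le _ (Finset.mem_univ i)
    have h2 : ε * y i ≤ (P.mulVec s) i := by
      rw [← le_div_iff₀ (ypos i)]; exact this
    nlinarith [ypos i]
  have hmono : ∀ x x' : n → ℝ, (∀ i, x i ≤ x' i) → ∀ i, (P.mulVec x) i ≤ (P.mulVec x') i := by
    intro x x' hx i
    apply Finset.sum_le_sum
    intro j _
    exact mul_le_mul_of_nonneg_left (hx j) (hPnn i j)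
  have hiter : ∀ M : ℕ, ∀ i, c ^ M * y i ≤ ((P ^ M).mulVec y) i := by
    intro M
    induction M with
    | zero => intro i; simp [Matrix.one_mulVec]
    | succ M ih =>
      intro i
      have h1 : (P ^ (M + 1)).mulVec y = P.mulVec ((P ^ M).mulVec y) := by
        rw [pow_succ', ← Matrix.mulVec_mulVec]
      rw [h1]
      have h2 : ∀ i, (c ^ M • y) i ≤ ((P ^ M).mulVec y) i := by
        intro i; simpa using ih i
      have h3 : (P.mulVec (c ^ M • y)) i ≤ (P.mulVec ((P ^ M).mulVec y)) i := hmono _ _ h2 i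
      have h4 : (P.mulVec (c ^ M • y)) i = c ^ M * (P.mulVec y) i := by
        rw [Matrix.mulVec_smul]; simp
      have h5 : c * y i ≤ (P.mulVec y) i := hcy i
      have h6 : c ^ M * (c * y i) ≤ c ^ M * (P.mulVec y) i :=
        mul_le_mul_of_nonneg_left h5 (pow_nonneg hcpos.le M)
      calc c ^ (M + 1) * y i = c ^ M * (c * y i) := by ring
        _ ≤ c ^ M * (P.mulVec y) i := h6
        _ = (P.mulVec (c ^ M • y)) i := h4.symm
        _ ≤ _ := h3
  -- trace lower bound
  set pmin := Finset.univ.inf' Finset.univ_nonempty (fun p : n × n => P p.1 p.2) with hpm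
  have hpmin_pos : 0 < pmin := by
    rw [hpm, Finset.lt_inf'_iff]; intro p _; exact hpos p.1 p.2
  have hpmin_le : ∀ i j, pmin ≤ P i j := fun i j =>
    Finset.inf'_le _ (Finset.mem_univ ((i, j) : n × n))
  set ymax := Finset.univ.sup' Finset.univ_nonempty y with hym
  have hymax : ∀ i, y i ≤ ymax := fun i => Finset.le_sup' _ (Finset.mem_univ i)
  have hymax_pos : 0 < ymax :=
    lt_of_lt_of_le (ypos (Classical.arbitrary n)) (hymax _)
  set Ysum := ∑ i, y i with hYs
  have hYsum_pos : 0 < Ysum :=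
    Finset.sum_pos (fun i _ => ypos i) Finset.univ_nonempty
  set N := (Fintype.card n : ℝ) with hN
  set C := pmin * Ysum / ymax with hC
  have hCpos : 0 < C := by positivity
  have key : ∀ M : ℕ, C * c ^ M ≤ N * r ^ k * (r ^ k) ^ M := by
    intro M
    -- sum of all entries of P^M weighted
    have hsum1 : c ^ M * Ysum ≤ ∑ j, ((P ^ M).mulVec y) j := by
      rw [hYs, Finset.mul_sum]
      exact Finset.sum_le_sum fun j _ => hiter M j
    have hsum2 : ∑ j, ((P ^ M).mulVec y) j ≤ ymax * ∑ j, ∑ i, (P ^ M) j i := by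
      rw [Finset.mul_sum]
      apply Finset.sum_le_sum
      intro j _
      rw [Matrix.mulVec, Finset.mul_sum]
      apply Finset.sum_le_sum
      intro i _
      calc (P ^ M) j i * y i ≤ (P ^ M) j i * ymax :=
            mul_le_mul_of_nonneg_left (hymax i) (pow_entries_nonneg hPnn M j i)
        _ = ymax * (P ^ M) j i := by ring
    have htrlow : pmin * ∑ j, ∑ i, (P ^ M) j i ≤ (P ^ (M + 1)).trace := by
      rw [Matrix.trace]
      have : ∀ i, pmin * ∑ j, (P ^ M) j i ≤ (P ^ (M + 1)) i i := by
        intro i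
        rw [pow_succ', Matrix.mul_apply, Finset.mul_sum]
        apply Finset.sum_le_sum
        intro j _
        exact mul_le_mul_of_nonneg_right (hpmin_le i j) (pow_entries_nonneg hPnn M j i)
      calc pmin * ∑ j, ∑ i, (P ^ M) j i = ∑ i, pmin * ∑ j, (P ^ M) j i := by
            rw [← Finset.mul_sum, Finset.sum_comm]
        _ ≤ ∑ i, (P ^ (M + 1)) i i := Finset.sum_le_sum fun i _ => this i
        _ = _ := by simp [Matrix.diag]
    have htrup : (P ^ (M + 1)).trace ≤ N * (r ^ k) ^ (M + 1) := by
      have : P ^ (M + 1) = B ^ (k * (M + 1)) := by rw [hP, ← pow_mul]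
      rw [this, ← pow_mul]
      exact trace_pow_bound B hspec (by positivity)
    -- combine
    have h1 : pmin * (c ^ M * Ysum) ≤ pmin * (ymax * ∑ j, ∑ i, (P ^ M) j i) :=
      mul_le_mul_of_nonneg_left (le_trans hsum1 hsum2) hpmin_pos.le
    have h2 : pmin * (ymax * ∑ j, ∑ i, (P ^ M) j i)
        = ymax * (pmin * ∑ j, ∑ i, (P ^ M) j i) := by ring
    have h3 : pmin * (c ^ M * Ysum) ≤ ymax * (N * (r ^ k) ^ (M + 1)) := by
      rw [h2] at h1
      exact le_trans h1 (mul_le_mul_of_nonneg_left (le_trans htrlow htrup) hymax_pos.le)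
    have h4 : C * c ^ M = pmin * (c ^ M * Ysum) / ymax := by
      rw [hC]; field_simp
    rw [h4]
    rw [div_le_iff₀ hymax_pos]
    calc pmin * (c ^ M * Ysum) ≤ ymax * (N * (r ^ k) ^ (M + 1)) := h3
      _ = N * r ^ k * (r ^ k) ^ M * ymax := by ring
  -- contradiction
  have hclt : 1 < c / r ^ k := by
    rw [lt_div_iff₀ hrk]; linarith
  obtain ⟨M, hM⟩ := pow_unbounded_of_one_lt (N * r ^ k / C) hclt
  have := key M
  have hfinal : (c / r ^ k) ^ M ≤ N * r ^ k / C := by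
    rw [div_pow, div_le_div_iff₀ (by positivity) hCpos]
    nlinarith [pow_pos hrk M, pow_pos hcpos M]
  exact absurd hM (not_lt.mpr hfinal)

theorem mulVec_pow_eig {A : Matrix n n ℂ} {z : ℂ} {v : n → ℂ} (h : A.mulVec v = z • v) (m : ℕ) :
    (A ^ m).mulVec v = z ^ m • v := by
  induction m with
  | zero => simp
  | succ k ih =>
    rw [pow_succ', ← Matrix.mulVec_mulVec, ih, Matrix.mulVec_smul, h, smul_smul, ← pow_succ]

theorem perron [Nonempty n] (B : Matrix n n ℝ) (hEp : EventuallyPos B)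
    (hrpos : 0 < specRad B) : ((specRad B : ℝ) : ℂ) ∈ specC B := by
  set r := specRad B with hr
  obtain ⟨k₀, hk₀, hk⟩ := hEp
  obtain ⟨z₀, hz₀, habs⟩ := exists_abs_eq_specRad B
  rw [← hr] at habs
  have hspec : ∀ z ∈ specC B, ‖z‖ ≤ r := fun z hz => abs_le_specRad hz
  rw [specC_iff] at hz₀
  obtain ⟨v, hv, hBv⟩ := hz₀
  set u : n → ℝ := fun i => ‖v i‖ with hu
  have hu0 : ∀ i, 0 ≤ u i := fun i => norm_nonneg _
  obtain ⟨i₀, hi₀⟩ := Function.ne_iff.mp hv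
  have hui₀ : 0 < u i₀ := norm_pos_iff.mpr (by simpa using hi₀)
  have hge : ∀ k ≥ k₀, ∀ i, r ^ k * u i ≤ ((B ^ k).mulVec u) i := by
    intro k hkk i
    have hpow : ((B ^ k).map Complex.ofReal).mulVec v = z₀ ^ k • v := by
      rw [mapC_pow]; exact mulVec_pow_eig hBv k
    have hentry : ∑ j, (((B ^ k) i j : ℝ) : ℂ) * v j = z₀ ^ k * v i := by
      have := congrFun hpow i
      simpa [Matrix.mulVec, dotProduct, Matrix.map_apply] using this
    have habs2 : ‖z₀ ^ k * v i‖ = r ^ k * u i := by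
      rw [norm_mul, norm_pow, habs, hu]
    calc r ^ k * u i = ‖∑ j, (((B ^ k) i j : ℝ) : ℂ) * v j‖ := by
          rw [hentry, habs2]
      _ ≤ ∑ j, ‖(((B ^ k) i j : ℝ) : ℂ) * v j‖ :=
          norm_sum_le _ _
      _ = ∑ j, (B ^ k) i j * u j := by
          apply Finset.sum_congr rfl
          intro j _
          rw [norm_mul, Complex.norm_real, Real.norm_eq_abs, abs_of_pos (hk k hkk i j)]
      _ = ((B ^ k).mulVec u) i := by rw [Matrix.mulVec, dotProduct]
  by_cases h1 : (B ^ k₀).mulVec u = fun i => r ^ k₀ * u i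
  · by_cases h2 : (B ^ (k₀ + 1)).mulVec u = fun i => r ^ (k₀ + 1) * u i
    · -- equality case : B u = r u
      have hBu : B.mulVec u = fun i => r * u i := by
        have hstep : (B ^ (k₀ + 1)).mulVec u = B.mulVec ((B ^ k₀).mulVec u) := by
          rw [pow_succ', ← Matrix.mulVec_mulVec]
        rw [h1] at hstep
        have hBsm : B.mulVec (fun i => r ^ k₀ * u i) = (r ^ k₀) • B.mulVec u := by
          have : (fun i => r ^ k₀ * u i) = (r ^ k₀) • u := by funext i; simp
          rw [this, Matrix.mulVec_smul]
        rw [hBsm, h2] at hstep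
        funext i
        have := congrFun hstep i
        simp only [Pi.smul_apply, smul_eq_mul] at this
        have hrk : (0 : ℝ) < r ^ k₀ := pow_pos hrpos k₀
        have h3 : r ^ k₀ * ((B.mulVec u) i) = r ^ k₀ * (r * u i) := by
          rw [← this]; ring
        exact mul_left_cancel₀ hrk.ne' h3
      rw [specC_iff]
      refine ⟨fun i => ((u i : ℝ) : ℂ), ?_, ?_⟩
      · intro h0
        have := congrFun h0 i₀
        simp only [Pi.zero_apply, Complex.ofReal_eq_zero] at this
        exact hui₀.ne' this
      · funext i
        have := congrFun hBu i
        simp only [Matrix.mulVec, dotProduct, Matrix.map_apply, Pi.smul_apply,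
          smul_eq_mul]
        push_cast
        rw [show ∑ j, ((B i j : ℂ)) * ((u j : ℝ) : ℂ) = (((∑ j, B i j * u j : ℝ)) : ℂ) by
          push_cast; rfl]
        rw [show ∑ j, B i j * u j = r * u i from this]
        push_cast; ring
    · exact (perron_contra (Nat.succ_pos k₀)
        (fun i j => hk (k₀ + 1) (Nat.le_succ_of_le le_rfl) i j) hrpos hspec hu0 hui₀
        (hge (k₀ + 1) (Nat.le_succ_of_le le_rfl)) h2).elim
  · exact (perron_contra hk₀
      (fun i j => hk k₀ le_rfl i j) hrpos hspec hu0 hui₀ (hge k₀ le_rfl) h1).elim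

end Aux


theorem ηre_eq (d u α γ β δ : ℝ) (l m : ℂ) :
    (ηgen d u α γ β δ l m).re = -d + u * (α + γ * l.re + β * m.re + δ * (l * m).re) := by
  simp only [ηgen, Complex.add_re, Complex.neg_re, Complex.mul_re, Complex.mul_im,
    Complex.add_im, Complex.ofReal_re, Complex.ofReal_im]
  ring

theorem Kre_eq (α γ β δ : ℝ) (l m : ℂ) :
    ((α : ℂ) + (γ : ℂ) * l + (β : ℂ) * m + (δ : ℂ) * l * m).re
      = α + γ * l.re + β * m.re + δ * (l * m).re := by
  simp only [Complex.add_re, Complex.mul_re, Complex.mul_im, Complex.add_im,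
    Complex.ofReal_re, Complex.ofReal_im]
  ring

/-- Proposition 4 (β version): if `A_o` is switching-equivalent to an eventually
positive matrix with spectral radius `μ > 0`, and `A_a` has a non-real
complex-conjugate pair of leading eigenvalues `λ, λ̄` with positive real part, then for
all large enough `β` the leading eigenvalues of `J(u)` are the non-real
complex-conjugate pair `η(u, λ, μ), η(u, λ̄, μ)`, and
`K = α + γ Re(λ) + βμ + δμ Re(λ) > 0`. -/
theorem oscillation_graphs_beta {Na No : ℕ} (hNa : 1 ≤ Na) (hNo : 1 ≤ No)
    (Aa : Matrix (Fin Na) (Fin Na) ℝ) (Ao : Matrix (Fin No) (Fin No) ℝ)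
    (d u α γ δ : ℝ) (hd : 0 < d) (hu : 0 < u) (hα : 0 ≤ α) (hγ : 0 ≤ γ) (hδ : 0 ≤ δ)
    (M : Matrix (Fin No) (Fin No) ℝ) (hM : IsSwitching M)
    (hEp : EventuallyPos (M * Ao * M))
    (mu : ℝ) (hmu : mu = specRad Ao) (hmupos : 0 < mu)
    (hγδ : 0 < γ + δ * mu)
    (lam : ℂ) (hlam : lam ∈ specC Aa) (hlamim : 0 < lam.im) (hlamre : 0 < lam.re)
    (hlamlead : ∀ la ∈ specC Aa, la.re ≤ lam.re ∧
      (la.re = lam.re → la = lam ∨ la = (starRingEnd ℂ) lam)) :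
    ∃ βstar : ℝ, 0 ≤ βstar ∧ ∀ β : ℝ, βstar < β →
      (∀ la ∈ specC Aa, ∀ μo ∈ specC Ao,
        ¬(la = lam ∧ μo = (mu : ℂ)) → ¬(la = (starRingEnd ℂ) lam ∧ μo = (mu : ℂ)) →
        (ηgen d u α γ β δ la μo).re < (ηgen d u α γ β δ lam (mu : ℂ)).re) ∧
      (ηgen d u α γ β δ lam (mu : ℂ) ∈ specC (Jmat Aa Ao d u α γ β δ)) ∧
      (ηgen d u α γ β δ ((starRingEnd ℂ) lam) (mu : ℂ) ∈ specC (Jmat Aa Ao d u α γ β δ)) ∧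
      (ηgen d u α γ β δ ((starRingEnd ℂ) lam) (mu : ℂ)
        = (starRingEnd ℂ) (ηgen d u α γ β δ lam (mu : ℂ))) ∧
      ((ηgen d u α γ β δ lam (mu : ℂ)).im ≠ 0) ∧
      IsGreatest {x : ℝ | ∃ l ∈ specC Aa, ∃ m ∈ specC Ao,
          x = ((α : ℂ) + (γ : ℂ) * l + (β : ℂ) * m + (δ : ℂ) * l * m).re}
        (α + γ * lam.re + β * mu + δ * mu * lam.re) ∧
      0 < α + γ * lam.re + β * mu + δ * mu * lam.re := by
  have hNea : Nonempty (Fin Na) := ⟨⟨0, by omega⟩⟩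
  have hNeo : Nonempty (Fin No) := ⟨⟨0, by omega⟩⟩
  have hspecEq : specC (M * Ao * M) = specC Ao := specC_switch Ao M hM
  have hradEq : specRad (M * Ao * M) = specRad Ao := by
    unfold specRad; rw [hspecEq]
  have hmuAo : ((mu : ℝ) : ℂ) ∈ specC Ao := by
    have h1 : 0 < specRad (M * Ao * M) := by rw [hradEq, ← hmu]; exact hmupos
    have h2 := perron _ hEp h1
    rw [hspecEq] at h2
    rwa [hradEq, ← hmu] at h2
  have habs_m : ∀ m ∈ specC Ao, ‖m‖ ≤ mu := by
    intro m hm; rw [hmu]; exact abs_le_specRad hm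
  have hre_m : ∀ m ∈ specC Ao, m.re ≤ mu := fun m hm =>
    le_trans (Complex.re_le_norm m) (habs_m m hm)
  have hre_strict : ∀ m ∈ specC Ao, m ≠ (mu : ℂ) → m.re < mu := by
    intro m hm hne
    rcases lt_or_eq_of_le (hre_m m hm) with h | h
    · exact h
    · exfalso; apply hne
      have habs : ‖m‖ = m.re :=
        le_antisymm (h ▸ habs_m m hm) (Complex.re_le_norm m)
      have him : m.im = 0 := by
        have h2 := Complex.sq_norm m
        rw [habs, Complex.normSq_apply] at h2
        nlinarith
      apply Complex.ext
      · simpa using h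
      · simp [him]
  set RA := specRad Aa with hRA
  have hRA0 : 0 ≤ RA := specRad_nonneg Aa
  have habs_l : ∀ l ∈ specC Aa, ‖l‖ ≤ RA := fun l hl => abs_le_specRad hl
  set T : Set ℂ := {m | m ∈ specC Ao ∧ m ≠ (mu : ℂ)} with hT
  set G : Set ℝ := (fun m : ℂ => mu - m.re) '' T with hG
  have hGfin : G.Finite := ((specC_finite Ao).subset (fun x hx => hx.1)).image _
  set gap := sInf G with hgapdef
  have hgap_le : ∀ m ∈ specC Ao, m ≠ (mu : ℂ) → gap ≤ mu - m.re := by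
    intro m hm hne
    exact csInf_le hGfin.bddBelow ⟨m, ⟨hm, hne⟩, rfl⟩
  have hgap_pos : G.Nonempty → 0 < gap := by
    intro hne
    obtain ⟨m, hmT, heq⟩ := hne.csInf_mem hGfin
    have heq' : mu - m.re = sInf G := heq
    rw [hgapdef, ← heq']
    have := hre_strict m hmT.1 hmT.2
    linarith
  set Cδ := δ * (RA * mu + mu * lam.re) with hCδ
  have hCδeq : Cδ = δ * (RA * mu) + δ * (mu * lam.re) := by rw [hCδ]; ring
  have hCδ0 : 0 ≤ Cδ := by
    rw [hCδ]
    exact mul_nonneg hδ (add_nonneg (mul_nonneg hRA0 hmupos.le)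
      (mul_nonneg hmupos.le hlamre.le))
  refine ⟨max 0 (Cδ / gap), le_max_left _ _, ?_⟩
  intro β hβ
  have hβ0 : 0 < β := lt_of_le_of_lt (le_max_left 0 _) hβ
  have core_mu : ∀ l ∈ specC Aa, γ * l.re + β * mu + δ * (l * (mu : ℂ)).re
      ≤ γ * lam.re + β * mu + δ * (mu * lam.re) := by
    intro l hl
    have h1 : l.re ≤ lam.re := (hlamlead l hl).1
    have h2 : (l * (mu : ℂ)).re = l.re * mu := by simp [Complex.mul_re]
    rw [h2]
    nlinarith [mul_nonneg hγ (sub_nonneg.mpr h1),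
      mul_nonneg (mul_nonneg hδ hmupos.le) (sub_nonneg.mpr h1)]
  have core_mu_strict : ∀ l ∈ specC Aa, l ≠ lam → l ≠ (starRingEnd ℂ) lam →
      γ * l.re + β * mu + δ * (l * (mu : ℂ)).re
        < γ * lam.re + β * mu + δ * (mu * lam.re) := by
    intro l hl hne1 hne2
    have h1 : l.re < lam.re := by
      rcases lt_or_eq_of_le (hlamlead l hl).1 with h | h
      · exact h
      · rcases (hlamlead l hl).2 h with h' | h'
        · exact absurd h' hne1
        · exact absurd h' hne2
    have h2 : (l * (mu : ℂ)).re = l.re * mu := by simp [Complex.mul_re]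
    rw [h2]
    nlinarith [mul_pos hγδ (sub_pos.mpr h1)]
  have core_ne : ∀ l ∈ specC Aa, ∀ m ∈ specC Ao, m ≠ (mu : ℂ) →
      γ * l.re + β * m.re + δ * (l * m).re
        < γ * lam.re + β * mu + δ * (mu * lam.re) := by
    intro l hl m hm hne
    have hGne : G.Nonempty := ⟨mu - m.re, m, ⟨hm, hne⟩, rfl⟩
    have hgp := hgap_pos hGne
    have hβC : Cδ < β * gap := by
      have hx : Cδ / gap < β := lt_of_le_of_lt (le_max_right 0 _) hβ
      rw [div_lt_iff₀ hgp] at hx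
      linarith
    have hgm : gap ≤ mu - m.re := hgap_le m hm hne
    have hlm : (l * m).re ≤ RA * mu := by
      calc (l * m).re ≤ ‖l * m‖ := Complex.re_le_norm _
        _ = ‖l‖ * ‖m‖ := norm_mul _ _
        _ ≤ RA * mu := mul_le_mul (habs_l l hl) (habs_m m hm)
            (norm_nonneg _) hRA0
    have hγl : γ * l.re ≤ γ * lam.re :=
      mul_le_mul_of_nonneg_left (hlamlead l hl).1 hγ
    have hβm : β * gap ≤ β * (mu - m.re) := mul_le_mul_of_nonneg_left hgm hβ0.le
    nlinarith [mul_nonneg hδ (mul_nonneg hmupos.le hlamre.le),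
      mul_le_mul_of_nonneg_left hlm hδ]
  have hηlam : (ηgen d u α γ β δ lam (mu : ℂ)).re
      = -d + u * (α + γ * lam.re + β * mu + δ * (mu * lam.re)) := by
    rw [ηre_eq, Complex.ofReal_re,
      show (lam * (mu : ℂ)).re = mu * lam.re by simp [Complex.mul_re]; ring]
  refine ⟨?_, ?_, ?_, ?_, ?_, ?_, ?_⟩
  · intro la hla μo hμo hex1 hex2
    rw [ηre_eq, hηlam]
    have hcore : γ * la.re + β * μo.re + δ * (la * μo).re
        < γ * lam.re + β * mu + δ * (mu * lam.re) := by
      by_cases hm : μo = (mu : ℂ)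
      · subst hm
        have h1 : la ≠ lam := fun h => hex1 ⟨h, rfl⟩
        have h2 : la ≠ (starRingEnd ℂ) lam := fun h => hex2 ⟨h, rfl⟩
        have h3 := core_mu_strict la hla h1 h2
        simpa [Complex.ofReal_re] using h3
      · exact core_ne la hla μo hμo hm
    have h4 : α + γ * la.re + β * μo.re + δ * (la * μo).re
        < α + γ * lam.re + β * mu + δ * (mu * lam.re) := by linarith
    nlinarith [mul_lt_mul_of_pos_left h4 hu]
  · exact eta_mem_specJ Aa Ao d u α γ β δ hlam hmuAo
  · exact eta_mem_specJ Aa Ao d u α γ β δ (specC_conj hlam) hmuAo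
  · simp only [ηgen, map_add, map_neg, _root_.map_mul, Complex.conj_ofReal]
  · have him : (ηgen d u α γ β δ lam (mu : ℂ)).im = u * ((γ + δ * mu) * lam.im) := by
      simp only [ηgen, Complex.add_im, Complex.neg_im, Complex.mul_im, Complex.mul_re,
        Complex.add_re, Complex.ofReal_re, Complex.ofReal_im]
      ring
    rw [him]
    exact (mul_pos hu (mul_pos hγδ hlamim)).ne'
  · constructor
    · refine ⟨lam, hlam, (mu : ℂ), hmuAo, ?_⟩
      rw [Kre_eq, Complex.ofReal_re,
        show (lam * (mu : ℂ)).re = mu * lam.re by simp [Complex.mul_re]; ring]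
      ring
    · rintro x ⟨l, hl, m, hm, rfl⟩
      rw [Kre_eq]
      by_cases hmq : m = (mu : ℂ)
      · subst hmq
        have h1 := core_mu l hl
        have h2 : ((mu : ℂ)).re = mu := Complex.ofReal_re mu
        rw [h2]
        linarith
      · have h1 := core_ne l hl m hm hmq
        linarith
  · have p1 : 0 < β * mu := mul_pos hβ0 hmupos
    have p2 : 0 ≤ γ * lam.re := mul_nonneg hγ hlamre.le
    have p3 : 0 ≤ δ * mu * lam.re := mul_nonneg (mul_nonneg hδ hmupos.le) hlamre.le
    linarith
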